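/- arXiv:2206.10308 — 2 statements merged into one kernel-verified Lean document; each statement's English description precedes it below -/
import Mathlib

section
/- Let T̂_n denote the monic Chebyshev polynomials of the first kind. Then for every n ≥ 2: (X² − 1)·D_q T̂_n = γ_n·(T̂_{n+1} − (1/4)·T̂_{n−1}) as polynomials in ℂ[X]. -/
noncomputable section

/-- Real power `q ^ r` (with `q > 0` in applications), coerced into `ℂ`. -/
def rp (q : ℝ) (r : ℝ) : ℂ := ((q ^ r : ℝ) : ℂ)

/-- The lattice point `x(z) = (z + z⁻¹)/2`. -/
def xl (z : ℂ) : ℂ := (z + z⁻¹) / 2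

/-- `x₊(z) = (q^{1/2} z + q^{-1/2} z⁻¹)/2`. -/
def xp (q : ℝ) (z : ℂ) : ℂ := (rp q (1/2) * z + rp q (-(1/2)) * z⁻¹) / 2

/-- `x₋(z) = (q^{-1/2} z + q^{1/2} z⁻¹)/2`. -/
def xm (q : ℝ) (z : ℂ) : ℂ := (rp q (-(1/2)) * z + rp q (1/2) * z⁻¹) / 2

/-- `IsSq q f g` means `g = S_q f`, i.e. `g` satisfies the defining property of the
averaging operator applied to `f`. -/
def IsSq (q : ℝ) (f g : Polynomial ℂ) : Prop :=
  ∀ z : ℂ, z ≠ 0 → Polynomial.eval (xl z) g =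
    (Polynomial.eval (xp q z) f + Polynomial.eval (xm q z) f) / 2

/-- `IsDq q f g` means `g = D_q f`, i.e. `g` satisfies the defining property of the
Askey-Wilson operator applied to `f`. -/
def IsDq (q : ℝ) (f g : Polynomial ℂ) : Prop :=
  ∀ z : ℂ, z ≠ 0 → Polynomial.eval (xl z) g * (xp q z - xm q z) =
    Polynomial.eval (xp q z) f - Polynomial.eval (xm q z) f

/-- `α = (q^{1/2} + q^{-1/2})/2`. -/
def alphaC (q : ℝ) : ℂ := (rp q (1/2) + rp q (-(1/2))) / 2

/-- `α_n = (q^{n/2} + q^{-n/2})/2`. -/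
def alphaN (q : ℝ) (n : ℕ) : ℂ := (rp q ((n : ℝ)/2) + rp q (-((n : ℝ)/2))) / 2

/-- `γ_n = (q^{n/2} - q^{-n/2})/(q^{1/2} - q^{-1/2})`. -/
def gammaN (q : ℝ) (n : ℕ) : ℂ :=
  (rp q ((n : ℝ)/2) - rp q (-((n : ℝ)/2))) / (rp q (1/2) - rp q (-(1/2)))

/-- The monic Chebyshev polynomials of the first kind. -/
def chebM (n : ℕ) : Polynomial ℂ :=
  if n = 0 then 1 else (2 : ℂ) ^ (1 - (n : ℤ)) • Polynomial.Chebyshev.T ℂ (n : ℤ)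

end

open Polynomial

lemma T_eval_aux (z : ℂ) (hz : z ≠ 0) :
    ∀ n : ℕ, eval (xl z) (Polynomial.Chebyshev.T ℂ (n : ℤ)) = (z ^ n + z⁻¹ ^ n) / 2 ∧
      eval (xl z) (Polynomial.Chebyshev.T ℂ ((n : ℤ) + 1)) = (z ^ (n+1) + z⁻¹ ^ (n+1)) / 2 := by
  intro n
  induction n with
  | zero =>
      constructor
      · simp [Polynomial.Chebyshev.T_zero]
      · simp [Polynomial.Chebyshev.T_one, xl]
  | succ k ih =>
      obtain ⟨ih1, ih2⟩ := ih
      refine ⟨by exact_mod_cast ih2, ?_⟩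
      have h := Polynomial.Chebyshev.T_add_two ℂ (k : ℤ)
      have hcast : (((k+1 : ℕ)) : ℤ) + 1 = (k : ℤ) + 2 := by push_cast; ring
      rw [hcast, h]
      simp only [eval_sub, eval_mul, eval_ofNat, eval_X]
      rw [ih1, ih2, xl]
      have hz' : z * z⁻¹ = 1 := mul_inv_cancel₀ hz
      linear_combination ((z ^ k + z⁻¹ ^ k) / 2) * hz'

lemma chebM_eval (n : ℕ) (hn : 1 ≤ n) (z : ℂ) (hz : z ≠ 0) :
    eval (xl z) (chebM n) = (z ^ n + z⁻¹ ^ n) / 2 ^ n := by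
  have hT := (T_eval_aux z hz n).1
  rw [chebM, if_neg (by omega)]
  rw [Polynomial.smul_eq_C_mul, eval_mul, eval_C, hT]
  have h2 : (2 : ℂ) ^ (1 - (n : ℤ)) = 2 / 2 ^ n := by
    rw [zpow_sub₀ (by norm_num : (2:ℂ) ≠ 0), zpow_one, zpow_natCast]
  rw [h2]
  have : (2:ℂ) ^ n ≠ 0 := pow_ne_zero _ two_ne_zero
  field_simp

set_option maxHeartbeats 2000000 in
theorem stmt14 (q : ℝ) (hq0 : 0 < q) (hq1 : q < 1) :
    ∀ n : ℕ, 2 ≤ n → ∀ D : Polynomial ℂ, IsDq q (chebM n) D →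
      (Polynomial.X ^ 2 - 1) * D =
        Polynomial.C (gammaN q n) *
          (chebM (n + 1) - Polynomial.C (1/4 : ℂ) * chebM (n - 1)) := by
  intro n hn D hD
  obtain ⟨m, rfl⟩ : ∃ m, n = m + 2 := ⟨n - 2, by omega⟩
  -- basic facts about s = q^(1/2)
  set s : ℂ := rp q (1/2) with hs_def
  have hsr : (0:ℝ) < q ^ (1/2 : ℝ) := Real.rpow_pos_of_pos hq0 _
  have hs : s ≠ 0 := by
    simp only [hs_def, rp]
    exact_mod_cast hsr.ne'
  have hsinv : rp q (-(1/2)) = s⁻¹ := by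
    simp only [hs_def, rp, Real.rpow_neg hq0.le]
    push_cast
    ring
  have hs2 : s ^ 2 ≠ 1 := by
    have : s ^ 2 = (q : ℂ) := by
      simp only [hs_def, rp]
      rw [← Complex.ofReal_pow, ← Real.rpow_natCast (q ^ (1/2:ℝ)) 2, ← Real.rpow_mul hq0.le]
      norm_num
    rw [this]
    intro h
    have : q = 1 := by exact_mod_cast h
    linarith
  have hsk : ∀ k : ℕ, rp q ((k : ℝ)/2) = s ^ k := by
    intro k
    simp only [hs_def, rp]
    rw [← Complex.ofReal_pow, ← Real.rpow_natCast (q ^ (1/2:ℝ)) k, ← Real.rpow_mul hq0.le]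
    norm_num
    congr 1
    ring
  have hskn : ∀ k : ℕ, rp q (-((k : ℝ)/2)) = (s ^ k)⁻¹ := by
    intro k
    simp only [hs_def, rp, Real.rpow_neg hq0.le]
    push_cast [Real.rpow_neg hq0.le]
    rw [← Complex.ofReal_pow, ← Real.rpow_natCast (q ^ (1/2:ℝ)) k, ← Real.rpow_mul hq0.le]
    norm_num
    congr 2
    ring
  have hgamma : gammaN q (m+2) = (s ^ (m+2) - (s ^ (m+2))⁻¹) / (s - s⁻¹) := by
    rw [gammaN, hsinv, ← hs_def]
    have h1 : ((m + 2 : ℕ) : ℝ) / 2 = ((m+2 : ℕ) : ℝ)/2 := rfl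
    rw [show rp q (((m+2:ℕ)) / 2) = s ^ (m+2) from hsk (m+2),
        show rp q (-(((m+2:ℕ)) / 2)) = (s ^ (m+2))⁻¹ from hskn (m+2)]
  have hssub : s - s⁻¹ ≠ 0 := by
    intro h
    apply hs2
    field_simp at h
    linear_combination h
  -- the key pointwise identity
  have key : ∀ z : ℂ, z ≠ 0 → z ^ 2 ≠ 1 →
      eval (xl z) ((Polynomial.X ^ 2 - 1) * D) =
      eval (xl z) (Polynomial.C (gammaN q (m+2)) *
        (chebM (m + 2 + 1) - Polynomial.C (1/4 : ℂ) * chebM (m + 2 - 1))) := by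
    intro z hz hz2
    have hzsub : z - z⁻¹ ≠ 0 := by
      intro h
      apply hz2
      field_simp at h
      linear_combination h
    have hA : xp q z - xm q z = (s - s⁻¹) * (z - z⁻¹) / 2 := by
      rw [xp, xm, hsinv, ← hs_def]; ring
    have hAne : xp q z - xm q z ≠ 0 := by
      rw [hA]
      exact div_ne_zero (mul_ne_zero hssub hzsub) two_ne_zero
    have hDz := hD z hz
    -- rewrite evals at xp, xm as evals at xl (s*z), xl (s⁻¹*z)
    have hxp : xp q z = xl (s * z) := by
      rw [xp, xl, hsinv, ← hs_def, mul_inv]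
    have hxm : xm q z = xl (s⁻¹ * z) := by
      rw [xm, xl, hsinv, ← hs_def, mul_inv, inv_inv]
    have hsz : s * z ≠ 0 := mul_ne_zero hs hz
    have hsz' : s⁻¹ * z ≠ 0 := mul_ne_zero (inv_ne_zero hs) hz
    have e1 : eval (xp q z) (chebM (m+2)) = ((s*z) ^ (m+2) + ((s*z)⁻¹) ^ (m+2)) / 2 ^ (m+2) := by
      rw [hxp]; exact chebM_eval (m+2) (by omega) _ hsz
    have e2 : eval (xm q z) (chebM (m+2)) =
        ((s⁻¹*z) ^ (m+2) + ((s⁻¹*z)⁻¹) ^ (m+2)) / 2 ^ (m+2) := by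
      rw [hxm]; exact chebM_eval (m+2) (by omega) _ hsz'
    have e3 : eval (xl z) (chebM (m+3)) = (z ^ (m+3) + z⁻¹ ^ (m+3)) / 2 ^ (m+3) :=
      chebM_eval (m+3) (by omega) z hz
    have e4 : eval (xl z) (chebM (m+1)) = (z ^ (m+1) + z⁻¹ ^ (m+1)) / 2 ^ (m+1) :=
      chebM_eval (m+1) (by omega) z hz
    have h21 : m + 2 + 1 = m + 3 := rfl
    have h22 : m + 2 - 1 = m + 1 := rfl
    rw [h21, h22] at *
    simp only [eval_mul, eval_sub, eval_pow, eval_X, eval_one, eval_C]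
    rw [e3, e4]
    -- multiply both sides by (xp - xm) and use hDz
    apply mul_right_cancel₀ hAne
    rw [mul_assoc, hDz, e1, e2, hA, xl]
    have hG : gammaN q (m+2) * (s - s⁻¹) = s ^ (m+2) - s⁻¹ ^ (m+2) := by
      rw [hgamma, div_mul_cancel₀ _ hssub, inv_pow]
    have hzi : z * z⁻¹ = 1 := mul_inv_cancel₀ hz
    simp only [mul_inv, mul_pow, inv_inv]
    linear_combination
      (-(((z ^ (m+3) + z⁻¹ ^ (m+3)) / 2 ^ (m+3) -
          (1/4) * ((z ^ (m+1) + z⁻¹ ^ (m+1)) / 2 ^ (m+1))) * ((z - z⁻¹) / 2))) * hG +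
      ((s ^ (m+2) - s⁻¹ ^ (m+2)) *
        (3 * z ^ (m+2) + z ^ (m+1) * z⁻¹ - z * z⁻¹ ^ (m+1) - 3 * z⁻¹ ^ (m+2)) / 2 ^ (m+4)) * hzi
  -- conclude by infinitely many evaluation points
  apply Polynomial.eq_of_infinite_eval_eq
  apply Set.infinite_of_injective_forall_mem
    (f := fun k : ℕ => xl (((k : ℂ) + 2)))
  · intro a b hab
    simp only [xl] at hab
    set a' : ℂ := (a : ℂ) + 2 with ha'
    set b' : ℂ := (b : ℂ) + 2 with hb'
    have haz : a' ≠ 0 := by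
      have : ((a + 2 : ℕ) : ℂ) ≠ 0 := Nat.cast_ne_zero.mpr (by omega)
      simpa [ha'] using this
    have hbz : b' ≠ 0 := by
      have : ((b + 2 : ℕ) : ℂ) ≠ 0 := Nat.cast_ne_zero.mpr (by omega)
      simpa [hb'] using this
    have hfac : (a' - b') * (a' * b' - 1) = 0 := by
      field_simp at hab
      linear_combination hab
    have hab1 : a' * b' - 1 ≠ 0 := by
      have : a' * b' = (((a+2)*(b+2) : ℕ) : ℂ) := by push_cast [ha', hb']; ring
      rw [this]
      intro h
      have h4 : (((a+2)*(b+2) : ℕ) : ℂ) = ((1:ℕ):ℂ) := by rw [sub_eq_zero] at h; simpa using h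
      have := Nat.cast_injective (R := ℂ) h4
      have : (a+2)*(b+2) = 1 := this
      nlinarith
    have heq : a' = b' := by
      rcases mul_eq_zero.mp hfac with h | h
      · exact sub_eq_zero.mp h
      · exact absurd h hab1
    rw [ha', hb'] at heq
    have : (a : ℂ) = (b : ℂ) := by linear_combination heq
    exact_mod_cast this
  · intro k
    show _ ∈ {x | _}
    simp only [Set.mem_setOf_eq]
    apply key
    · have h0 : ((k:ℂ) + 2) = (((k+2:ℕ)) : ℂ) := by push_cast; ring
      rw [h0]
      exact Nat.cast_ne_zero.mpr (by omega)
    · intro h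
      have : (((k : ℂ) + 2)) ^ 2 = (((k+2)^2 : ℕ) : ℂ) := by push_cast; ring
      rw [this] at h
      have h4 : ((k+2)^2 : ℕ) = 1 := by exact_mod_cast h
      have h5 : 2^2 ≤ (k+2)^2 := Nat.pow_le_pow_left (by omega) 2
      omega
end

section
/- Let (P_n)_{n≥0} be a monic OPS with recurrence coefficients (B_n), (C_n), and suppose there exists a complex sequence (c_n)_{n≥0} with c_0 = 0 such that S_q P_n = α_n·P_n + c_n·P_{n−1} for all n ≥ 0. Then c_1 = (α − 1)·B_0 and (α + 1)(2C_1 − 1) = (B_1 − (2α + 1)B_0)·B_0. -/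
theorem stmt17 (q : ℝ) (hq0 : 0 < q) (hq1 : q < 1)
    (P : ℕ → Polynomial ℂ) (B C : ℕ → ℂ)
    (hmonic : ∀ n, (P n).Monic) (hdeg : ∀ n, (P n).natDegree = n)
    (hCne : ∀ n, 1 ≤ n → C n ≠ 0)
    (hrec0 : Polynomial.X * P 0 = P 1 + Polynomial.C (B 0) * P 0)
    (hrec : ∀ n : ℕ, Polynomial.X * P (n + 1) =
      P (n + 2) + Polynomial.C (B (n + 1)) * P (n + 1) + Polynomial.C (C (n + 1)) * P n)
    (sc : ℕ → ℂ) (hc0 : sc 0 = 0)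
    (hstruct : ∀ n : ℕ, IsSq q (P n)
      (Polynomial.C (alphaN q n) * P n + Polynomial.C (sc n) * P (n - 1))) :
    sc 1 = (alphaC q - 1) * B 0 ∧
    (alphaC q + 1) * (2 * C 1 - 1) = (B 1 - (2 * alphaC q + 1) * B 0) * B 0 := by
  have hP0 : P 0 = 1 := (hmonic 0).natDegree_eq_zero.mp (hdeg 0)
  have hP1 : P 1 = Polynomial.X - Polynomial.C (B 0) := by
    have h := hrec0; rw [hP0] at h; linear_combination -h
  have hP2 : P 2 = (Polynomial.X - Polynomial.C (B 1)) * (Polynomial.X - Polynomial.C (B 0))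
      - Polynomial.C (C 1) := by
    have h := hrec 0; norm_num at h; rw [hP0, hP1] at h; linear_combination -h
  set s := rp q (1/2) with hs
  set t := rp q (-(1/2)) with ht
  have hst : s * t = 1 := by
    rw [hs, ht, rp, rp, ← Complex.ofReal_mul, ← Real.rpow_add hq0]
    norm_num
  have hA1 : alphaN q 1 = (s + t) / 2 := by
    rw [alphaN, hs, ht]; norm_num
  have key : ∀ r1 r2 : ℝ, rp q r1 * rp q r2 = rp q (r1 + r2) := by
    intro r1 r2
    rw [rp, rp, rp, ← Complex.ofReal_mul, ← Real.rpow_add hq0]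
  have hA2 : alphaN q 2 = (s * s + t * t) / 2 := by
    rw [alphaN, show ((2:ℕ):ℝ)/2 = (1/2)+(1/2) from by norm_num,
      show -((1:ℝ)/2 + 1/2) = -(1/2) + -(1/2) from by ring, ← key, ← key]
  have hAC : alphaC q = (s + t) / 2 := rfl
  have E1 := hstruct 1 1 one_ne_zero
  have E2 := hstruct 2 1 one_ne_zero
  have E3 := hstruct 2 Complex.I Complex.I_ne_zero
  rw [hP0, hP1, hA1] at E1
  rw [hP1, hP2, hA2] at E2 E3
  simp only [xl, xp, xm, Polynomial.eval_add, Polynomial.eval_mul, Polynomial.eval_sub,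
    Polynomial.eval_X, Polynomial.eval_C, Polynomial.eval_one, inv_one, Complex.inv_I] at E1 E2 E3
  rw [← hs, ← ht] at E1 E2 E3
  have hI : Complex.I * Complex.I = -1 := Complex.I_mul_I
  have hAC' : alphaC q = (s + t) / 2 := rfl
  have hne : (s + t - 2 : ℂ) ≠ 0 := by
    have ha : (0:ℝ) < q ^ ((1:ℝ)/2) := Real.rpow_pos_of_pos hq0 _
    have ha1 : q ^ ((1:ℝ)/2) < 1 := Real.rpow_lt_one hq0.le hq1 (by norm_num)
    have hbt : q ^ (-(1/2) : ℝ) = (q ^ ((1:ℝ)/2))⁻¹ := by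
      rw [← Real.rpow_neg hq0.le]
    have hinv : q ^ ((1:ℝ)/2) * (q ^ ((1:ℝ)/2))⁻¹ = 1 := mul_inv_cancel₀ ha.ne'
    have hpos : (0:ℝ) < q ^ ((1:ℝ)/2) + (q ^ ((1:ℝ)/2))⁻¹ - 2 := by
      nlinarith [sq_nonneg (q ^ ((1:ℝ)/2) - 1)]
    have : s + t - 2 = ((q ^ ((1:ℝ)/2) + (q ^ ((1:ℝ)/2))⁻¹ - 2 : ℝ) : ℂ) := by
      rw [hs, ht, rp, rp, hbt]; push_cast; ring
    rw [this]
    exact_mod_cast hpos.ne'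
  constructor
  · rw [hAC']
    linear_combination E1
  · rw [hAC']
    have key2 : (s + t - 2) * (((s + t) / 2 + 1) * (2 * C 1 - 1)
        - (B 1 - (2 * ((s + t) / 2) + 1) * B 0) * B 0) = 0 := by
      linear_combination (-2 * B 0) * E2 + (-2 + 2 * B 0) * E3
        + (2 * C 1 + 2 * (B 0)^2 - 2) * hst + ((-2 + 2 * B 0) * (s - t)^2 / 4) * hI
    rcases mul_eq_zero.mp key2 with h | h
    · exact absurd h hne
    · linear_combination h
end
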